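/- Let P and Q be probability measures on a common measurable space with TV(P, Q) ≤ ε, and let Ω be a measurable set with Q(Ω) ≥ 1 − δ. Suppose δ + ε ≤ 1/2. Then P(Ω) ≥ 1/2 > 0, so the truncated probability measure P̃ defined by P̃(A) := P(A ∩ Ω)/P(Ω) for measurable A is well defined, and TV(P̃, Q) ≤ δ + 2ε. -/
import Mathlib


open MeasureTheory

/-- Total variation distance between two measures: the supremum of `|P(A) - Q(A)|`
over measurable sets `A`. -/
noncomputable def tvDist {Ω : Type*} [MeasurableSpace Ω] (P Q : Measure Ω) : ℝ :=
  ⨆ A : {A : Set Ω // MeasurableSet A}, |(P A).toReal - (Q A).toReal|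

/-- If `TV(P,Q) ≤ ε`, `Q(S) ≥ 1-δ` and `δ + ε ≤ 1/2`, then `P(S) ≥ 1/2 > 0`,
so the truncation `P̃(A) = P(A ∩ S)/P(S)` is well defined, and `TV(P̃, Q) ≤ δ + 2ε`. -/
theorem tv_truncation_bound {Ω : Type} [MeasurableSpace Ω] (P Q : Measure Ω)
    [IsProbabilityMeasure P] [IsProbabilityMeasure Q]
    (ε δ : ℝ) (hε : 0 ≤ ε) (hδ : 0 ≤ δ)
    (hTV : tvDist P Q ≤ ε)
    (S : Set Ω) (hS : MeasurableSet S) (hQS : 1 - δ ≤ (Q S).toReal)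
    (hsum : δ + ε ≤ 1 / 2) :
    1 / 2 ≤ (P S).toReal ∧ 0 < (P S).toReal ∧
      tvDist ((P S)⁻¹ • P.restrict S) Q ≤ δ + 2 * ε := by
  have hbdd : BddAbove (Set.range fun A : {A : Set Ω // MeasurableSet A} =>
      |(P A).toReal - (Q A).toReal|) := by
    refine ⟨2, ?_⟩
    rintro x ⟨A, rfl⟩
    have h1 : (P (A : Set Ω)).toReal ≤ 1 := by
      have := prob_le_one (μ := P) (s := A)
      simpa using ENNReal.toReal_mono (by simp) this
    have h2 : (Q (A : Set Ω)).toReal ≤ 1 := by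
      have := prob_le_one (μ := Q) (s := A)
      simpa using ENNReal.toReal_mono (by simp) this
    have h3 : 0 ≤ (P (A : Set Ω)).toReal := ENNReal.toReal_nonneg
    have h4 : 0 ≤ (Q (A : Set Ω)).toReal := ENNReal.toReal_nonneg
    rw [abs_le]; constructor <;> linarith
  have key : ∀ A : Set Ω, MeasurableSet A →
      |(P A).toReal - (Q A).toReal| ≤ ε := by
    intro A hA
    exact le_trans (le_ciSup hbdd ⟨A, hA⟩) hTV
  set s := (P S).toReal with hs_def
  have hPfin : P S ≠ ⊤ := measure_ne_top P S
  have hs1 : s ≤ 1 := by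
    have := prob_le_one (μ := P) (s := S)
    simpa [hs_def] using ENNReal.toReal_mono (by simp) this
  have hkeyS := key S hS
  rw [abs_le] at hkeyS
  have hshalf : 1 / 2 ≤ s := by linarith
  have hspos : 0 < s := by linarith
  refine ⟨hshalf, hspos, ?_⟩
  apply ciSup_le
  rintro ⟨A, hA⟩
  have happ : (((P S)⁻¹ • P.restrict S) A).toReal = (P (A ∩ S)).toReal / s := by
    rw [Measure.smul_apply, Measure.restrict_apply hA, smul_eq_mul,
      ENNReal.toReal_mul, ENNReal.toReal_inv, hs_def]
    ring
  rw [happ]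
  set a := (P (A ∩ S)).toReal with ha_def
  have ha0 : 0 ≤ a := ENNReal.toReal_nonneg
  have has : a ≤ s := by
    exact ENNReal.toReal_mono hPfin (measure_mono Set.inter_subset_right)
  have hkeyA := key (A ∩ S) (hA.inter hS)
  rw [abs_le] at hkeyA
  set qAS := (Q (A ∩ S)).toReal with hqAS_def
  set qA := (Q A).toReal with hqA_def
  have hqmono : qAS ≤ qA :=
    ENNReal.toReal_mono (measure_ne_top Q A) (measure_mono Set.inter_subset_left)
  have hsplit : qA ≤ qAS + δ := by
    have hQcompl : (Q Sᶜ).toReal ≤ δ := by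
      have h := prob_compl_eq_one_sub (μ := Q) hS
      have : (Q Sᶜ).toReal = 1 - (Q S).toReal := by
        rw [h, ENNReal.toReal_sub_of_le (prob_le_one) (by simp)]
        simp
      linarith [this, hQS]
    have hle : Q A ≤ Q (A ∩ S) + Q Sᶜ := by
      calc Q A ≤ Q ((A ∩ S) ∪ Sᶜ) := measure_mono (by
        intro x hx
        by_cases hxS : x ∈ S
        · exact Or.inl ⟨hx, hxS⟩
        · exact Or.inr hxS)
      _ ≤ Q (A ∩ S) + Q Sᶜ := measure_union_le _ _
    have := ENNReal.toReal_mono (by finiteness) hle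
    rw [ENNReal.toReal_add (measure_ne_top _ _) (measure_ne_top _ _)] at this
    linarith
  set t := a / s with ht_def
  have ht1 : t ≤ 1 := by
    rw [ht_def, div_le_one hspos]; exact has
  have ht0 : 0 ≤ t := div_nonneg ha0 hspos.le
  have hat : a = t * s := by
    rw [ht_def]; field_simp
  rw [abs_le]
  constructor
  · -- -(δ+2ε) ≤ t - qA, i.e. qA - t ≤ δ+2ε
    have hta : a ≤ t := by nlinarith
    nlinarith
  · -- t - qA ≤ δ+2ε
    have h1s : 1 - s ≤ δ + ε := by linarith
    nlinarith
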